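/- Let n ≥ 2 and let K₁, …, Kₙ be subgroups of a group G. Then the left-nested iterated commutator subgroup is contained in the n-fold Higgins commutator: ⁅⋯⁅⁅K₁,K₂⁆,K₃⁆, …, Kₙ⁆ ≤ H(K₁, …, Kₙ). -/
import Mathlib


/-- The homomorphism on the free product `Monoid.CoprodI` of the subgroups `K i`
that is trivial on the `k`-th free factor and the canonical inclusion on every
other free factor. -/
def piHat {G : Type*} [Group G] {n : ℕ} (K : Fin n → Subgroup G) (k : Fin n) :
    Monoid.CoprodI (fun i => ↥(K i)) →* Monoid.CoprodI (fun i => ↥(K i)) :=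
  Monoid.CoprodI.lift
    (fun i => if i = k then 1 else Monoid.CoprodI.of (M := fun i => ↥(K i)) (i := i))

/-- The `n`-fold co-smash product `K₁ ◇ ⋯ ◇ Kₙ` of subgroups of `G`: the
intersection of the kernels of the homomorphisms `piHat K k`. -/
def cosmash {G : Type*} [Group G] {n : ℕ} (K : Fin n → Subgroup G) :
    Subgroup (Monoid.CoprodI (fun i => ↥(K i))) :=
  ⨅ k, (piHat K k).ker

/-- The `n`-fold Higgins commutator `H(K₁, …, Kₙ)` of subgroups of `G`: the image
of the co-smash product under the homomorphism induced by the subgroup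
inclusions. -/
def higgins {G : Type*} [Group G] {n : ℕ} (K : Fin n → Subgroup G) : Subgroup G :=
  (cosmash K).map (Monoid.CoprodI.lift (fun i => (K i).subtype))

/-- The left-nested iterated commutator subgroup `⁅⋯⁅⁅K₁,K₂⁆,K₃⁆, …, Kₙ⁆`. -/
def nestedCommutator {G : Type*} [Group G] : {n : ℕ} → (Fin n → Subgroup G) → Subgroup G
  | 0, _ => ⊥
  | _ + 1, K => (List.ofFn fun i => K i.succ).foldl (fun A B => ⁅A, B⁆) (K 0)

private lemma foldl_comm_map {G H : Type*} [Group G] [Group H] (f : G →* H) :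
    ∀ (l : List (Subgroup G)) (A : Subgroup G),
      (l.foldl (fun A B => ⁅A, B⁆) A).map f
        = (l.map (Subgroup.map f)).foldl (fun A B => ⁅A, B⁆) (A.map f)
  | [], _ => rfl
  | b :: t, A => by
      simp only [List.foldl_cons, List.map_cons]
      rw [foldl_comm_map f t, Subgroup.map_commutator]

private lemma map_nested {G H : Type*} [Group G] [Group H] (f : G →* H) {n : ℕ}
    (K : Fin n → Subgroup G) :
    (nestedCommutator K).map f = nestedCommutator (fun i => (K i).map f) := by
  cases n with
  | zero => simp [nestedCommutator]
  | succ m =>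
    show ((List.ofFn fun i => K i.succ).foldl (fun A B => ⁅A, B⁆) (K 0)).map f = _
    rw [foldl_comm_map, List.map_ofFn]
    rfl

private lemma foldl_bot {G : Type*} [Group G] :
    ∀ l : List (Subgroup G), l.foldl (fun A B => ⁅A, B⁆) ⊥ = ⊥
  | [] => rfl
  | b :: t => by
      simp only [List.foldl_cons, Subgroup.commutator_bot_left]
      exact foldl_bot t

private lemma foldl_of_bot_mem {G : Type*} [Group G] :
    ∀ (l : List (Subgroup G)) (A : Subgroup G), (⊥ : Subgroup G) ∈ l →
      l.foldl (fun A B => ⁅A, B⁆) A = ⊥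
  | [], _, h => by simp at h
  | b :: t, A, h => by
      rcases List.mem_cons.mp h with h | h
      · subst h
        simp only [List.foldl_cons, Subgroup.commutator_bot_right]
        exact foldl_bot t
      · exact foldl_of_bot_mem t _ h

private lemma nested_bot {G : Type*} [Group G] {m : ℕ} (K : Fin (m + 2) → Subgroup G)
    (k : Fin (m + 2)) (h : K k = ⊥) : nestedCommutator K = ⊥ := by
  show (List.ofFn fun i => K i.succ).foldl (fun A B => ⁅A, B⁆) (K 0) = ⊥
  rcases Fin.eq_zero_or_eq_succ k with rfl | ⟨j, rfl⟩
  · rw [h]; exact foldl_bot _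
  · exact foldl_of_bot_mem _ _ (by
      rw [List.mem_ofFn]
      exact ⟨j, h⟩)

/-- For `n ≥ 2` and subgroups `K₁, …, Kₙ` of `G`, the left-nested iterated commutator
subgroup `⁅⋯⁅⁅K₁,K₂⁆,K₃⁆, …, Kₙ⁆` is contained in the `n`-fold Higgins commutator. -/
theorem nested_le_higgins {G : Type*} [Group G] {n : ℕ} (hn : 2 ≤ n)
    (K : Fin n → Subgroup G) :
    nestedCommutator K ≤ higgins K := by
  obtain ⟨m, rfl⟩ : ∃ m, n = m + 2 := ⟨n - 2, by omega⟩
  set κ : Monoid.CoprodI (fun i => ↥(K i)) →* G :=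
    Monoid.CoprodI.lift (fun i => (K i).subtype) with hκ
  set Kh : Fin (m + 2) → Subgroup (Monoid.CoprodI (fun i => ↥(K i))) :=
    fun i => (Monoid.CoprodI.of (M := fun i => ↥(K i)) (i := i)).range with hKh
  have h1 : ∀ i, (Kh i).map κ = K i := by
    intro i
    rw [hKh, MonoidHom.map_range]
    have : κ.comp (Monoid.CoprodI.of (M := fun i => ↥(K i)) (i := i)) = (K i).subtype := by
      ext x
      simp [hκ, Monoid.CoprodI.lift_of]
    rw [this, Subgroup.range_subtype]
  have h2 : ∀ k i, (Kh i).map (piHat K k) = if i = k then ⊥ else Kh i := by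
    intro k i
    rw [hKh, MonoidHom.map_range]
    have : (piHat K k).comp (Monoid.CoprodI.of (M := fun i => ↥(K i)) (i := i)) =
        if i = k then 1 else Monoid.CoprodI.of (M := fun i => ↥(K i)) (i := i) := by
      ext x
      simp [piHat, Monoid.CoprodI.lift_of]
    rw [this]
    split
    · exact MonoidHom.range_one
    · rfl
  have key : nestedCommutator Kh ≤ cosmash K := by
    refine le_iInf fun k => ?_
    rw [← Subgroup.map_eq_bot_iff, map_nested]
    refine nested_bot _ k ?_
    rw [h2]
    simp
  calc nestedCommutator K = (nestedCommutator Kh).map κ := by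
        rw [map_nested]
        congr 1
        ext i : 1
        exact (h1 i).symm
    _ ≤ higgins K := Subgroup.map_mono key
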